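/- arXiv:1603.08655 — 2 statements merged into one kernel-verified Lean document; each statement's English description precedes it below -/
import Mathlib

section
/- Every galled network with n leaves has at most 6n − 5 nodes in total. -/
/-!
Framework for rooted phylogenetic networks, formalized as directed graphs
given by an adjacency relation `A : V → V → Prop` on a vertex type `V`,
with a distinguished root `ρ`.  Leaves are identified with their (unique)
labels, i.e. the labelling is the identity on leaf vertices.
-/

namespace PhyloNet

variable {V : Type} {W : Type}

/-- Indegree of a vertex. -/
noncomputable def inDeg (A : V → V → Prop) (v : V) : ℕ := {u | A u v}.ncard

/-- Outdegree of a vertex. -/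
noncomputable def outDeg (A : V → V → Prop) (v : V) : ℕ := {w | A v w}.ncard

/-- `p` is a directed path (walk) from `u` to `v`, given as the list of its vertices. -/
def IsPath (A : V → V → Prop) (u v : V) (p : List V) : Prop :=
  p.Chain' A ∧ p.head? = some u ∧ p.getLast? = some v

/-- `A` with root `ρ` is a phylogenetic network: a finite rooted acyclic digraph whose
root has indegree 0 and outdegree ≥ 2, from which every node is reachable, and in which
every non-root node is either a leaf (indegree 1, outdegree 0), an internal tree node
(indegree 1, outdegree ≥ 2) or a reticulation (indegree ≥ 2, outdegree 1). -/
structure IsNetwork (A : V → V → Prop) (ρ : V) : Prop where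
  finite : Finite V
  acyclic : ∀ v, ¬ Relation.TransGen A v v
  root_indeg : inDeg A ρ = 0
  root_outdeg : 2 ≤ outDeg A ρ
  reach_from_root : ∀ v, Relation.ReflTransGen A ρ v
  degree_cond : ∀ v, v ≠ ρ →
    (inDeg A v = 1 ∧ (outDeg A v = 0 ∨ 2 ≤ outDeg A v)) ∨ (2 ≤ inDeg A v ∧ outDeg A v = 1)

/-- Reticulation node: indegree ≥ 2 and outdegree 1. -/
def IsRet (A : V → V → Prop) (v : V) : Prop := 2 ≤ inDeg A v ∧ outDeg A v = 1

/-- Leaf: indegree 1 and outdegree 0. -/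
def IsLeaf (A : V → V → Prop) (v : V) : Prop := inDeg A v = 1 ∧ outDeg A v = 0

/-- Tree node: any node that is not a reticulation node. -/
def IsTreeNode (A : V → V → Prop) (v : V) : Prop := ¬ IsRet A v

/-- `u` is visible on `v`: every directed path from the root `ρ` to `v` contains `u`. -/
def Visible (A : V → V → Prop) (ρ u v : V) : Prop := ∀ p, IsPath A ρ v p → u ∈ p

/-- A network is reticulation-visible if every reticulation node is visible on some leaf. -/
def RetVisible (A : V → V → Prop) (ρ : V) : Prop :=
  ∀ r, IsRet A r → ∃ ℓ, IsLeaf A ℓ ∧ Visible A ρ r ℓ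

/-- Undirected adjacency in the subgraph `N − R(N)` induced on tree nodes. -/
def TAdj (A : V → V → Prop) (u v : V) : Prop :=
  IsTreeNode A u ∧ IsTreeNode A v ∧ (A u v ∨ A v u)

/-- `S` is a tree node component: a connected component (ignoring directions) of the
subgraph induced on the tree nodes. -/
def IsTNC (A : V → V → Prop) (S : Set V) : Prop :=
  ∃ u, IsTreeNode A u ∧ S = {v | Relation.ReflTransGen (TAdj A) u v}

/-- `r` is the root of the tree node component `S`: it lies in `S` and has indegree 0
within `N − R(N)`, i.e. it has no tree-node parent. -/
def CompRoot (A : V → V → Prop) (S : Set V) (r : V) : Prop :=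
  r ∈ S ∧ ∀ u, IsTreeNode A u → ¬ A u r

/-- Tree node component `C'` is below tree node component `C''`. -/
def Below (A : V → V → Prop) (C' C'' : Set V) : Prop :=
  ∃ r, IsRet A r ∧ (∃ c, A r c ∧ CompRoot A C' c) ∧ (∃ p ∈ C'', A p r)

/-- A big tree node component: a tree node component with at least two nodes. -/
def BigTNC (A : V → V → Prop) (C : Set V) : Prop :=
  IsTNC A C ∧ ∃ a ∈ C, ∃ b ∈ C, a ≠ b

/-- A single-leaf component: its node set is `{ℓ}` for some leaf `ℓ`. -/
def SingleLeafTNC (A : V → V → Prop) (C : Set V) : Prop :=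
  ∃ ℓ, IsLeaf A ℓ ∧ C = {ℓ}

/-- A lowest big tree node component: a big tree node component `C` such that every
tree node component whose root is a proper descendant of the root of `C` is a
single-leaf component. -/
def LowestBig (A : V → V → Prop) (C : Set V) : Prop :=
  BigTNC A C ∧ ∀ C' r' rC, IsTNC A C' → CompRoot A C' r' → CompRoot A C rC →
    Relation.TransGen A rC r' → SingleLeafTNC A C'

/-- An inner reticulation: all of its parents lie in one and the same tree node component. -/
def InnerRet (A : V → V → Prop) (r : V) : Prop :=
  IsRet A r ∧ ∃ S, IsTNC A S ∧ ∀ p, A p r → p ∈ S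

/-- `IR(C)`: reticulations all of whose parents lie in `C`. -/
def IRset (A : V → V → Prop) (C : Set V) : Set V :=
  {r | IsRet A r ∧ ∀ p, A p r → p ∈ C}

/-- `CR(C)`: reticulations with at least one parent in `C` and at least one parent outside `C`. -/
def CRset (A : V → V → Prop) (C : Set V) : Set V :=
  {r | IsRet A r ∧ (∃ p, A p r ∧ p ∈ C) ∧ (∃ p, A p r ∧ p ∉ C)}

/-- `L_C`: the leaves of the network lying in `C` together with the children of the
inner reticulations below `C`. -/
def LCset (A : V → V → Prop) (C : Set V) : Set V :=
  {ℓ | ℓ ∈ C ∧ IsLeaf A ℓ} ∪ {x | ∃ r ∈ IRset A C, A r x}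

/-- Bicombining: every reticulation node has indegree exactly 2. -/
def Bicombining (A : V → V → Prop) : Prop := ∀ r, IsRet A r → inDeg A r = 2

/-- Galled: every reticulation node `r` has an ancestor `u` admitting two
internal-node-disjoint directed paths from `u` to `r` in which every node other
than `r` is a tree node. -/
def Galled (A : V → V → Prop) : Prop :=
  ∀ r, IsRet A r → ∃ u, Relation.TransGen A u r ∧ ∃ p₁ p₂ : List V,
    IsPath A u r p₁ ∧ IsPath A u r p₂ ∧ p₁ ≠ p₂ ∧
    (∀ x, x ∈ p₁ → x ∈ p₂ → x = u ∨ x = r) ∧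
    (∀ x ∈ p₁, x ≠ r → IsTreeNode A x) ∧ (∀ x ∈ p₂, x ≠ r → IsTreeNode A x)

/-- Restriction of a digraph to a vertex subset. -/
def Restrict (A : V → V → Prop) (S : Set V) : V → V → Prop :=
  fun a b => a ∈ S ∧ b ∈ S ∧ A a b

/-- Descendants of `u` (including `u`); the vertex set of the subnetwork `D_N(u)`. -/
def Desc (A : V → V → Prop) (u : V) : Set V := {v | Relation.ReflTransGen A u v}

/-- Binary network: the root has outdegree 2, leaves have degree 1, and every other
node has total degree 3. -/
def IsBinary (A : V → V → Prop) (ρ : V) : Prop :=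
  outDeg A ρ = 2 ∧ ∀ v, v ≠ ρ →
    (inDeg A v = 1 ∧ outDeg A v = 0) ∨ (inDeg A v = 1 ∧ outDeg A v = 2) ∨
    (inDeg A v = 2 ∧ outDeg A v = 1)

/-- A phylogenetic tree: a network with no reticulation nodes. -/
def IsPhyloTree (A : W → W → Prop) (ρ : W) : Prop :=
  IsNetwork A ρ ∧ ∀ w, ¬ IsRet A w

/-- A node with indegree 1 and outdegree 1 (a suppressible node). -/
def Deg11 (A : V → V → Prop) (v : V) : Prop := inDeg A v = 1 ∧ outDeg A v = 1

/-- There is a directed path from `a` to `b` (of length ≥ 1) all of whose internal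
nodes are suppressible. -/
def SubdivPath (A : V → V → Prop) (a b : V) : Prop :=
  ∃ p : List V, IsPath A a b p ∧ 2 ≤ p.length ∧ ∀ z ∈ p, z ≠ a → z ≠ b → Deg11 A z

/-- `φ` witnesses that the digraph `A'` on the vertex set `S` is a subdivision of the
tree `AT` restricted to the vertex set `SW`: `φ` injectively maps the tree nodes onto
the non-suppressible nodes, edges of the tree correspond exactly to directed paths
whose internal nodes are suppressible, and leaves are mapped according to the leaf
correspondence `θ` (same labels). -/
def SubdivWitness (A' : V → V → Prop) (S : Set V) (AT : W → W → Prop) (SW : Set W)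
    (θ : W → V) (φ : W → V) : Prop :=
  Set.InjOn φ SW ∧ (∀ w ∈ SW, φ w ∈ S) ∧
  (∀ x ∈ S, ¬ Deg11 (Restrict A' S) x → ∃ w ∈ SW, φ w = x) ∧
  (∀ x ∈ SW, ∀ y ∈ SW, (Restrict AT SW x y ↔ SubdivPath (Restrict A' S) (φ x) (φ y))) ∧
  (∀ w ∈ SW, outDeg (Restrict AT SW) w = 0 → φ w = θ w)

/-- The digraph `A'` on vertex set `S` is a subdivision of the tree `AT` on `SW`. -/
def IsSubdivisionOf (A' : V → V → Prop) (S : Set V) (AT : W → W → Prop) (SW : Set W)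
    (θ : W → V) : Prop :=
  ∃ φ, SubdivWitness A' S AT SW θ φ

/-- `E`, `D`, `φ` witness that the subnetwork of `A` on vertex set `S` displays the
subtree of `AT` on vertex set `SW`: `E` is a set of reticulation edges of the
subnetwork containing all but one of the incoming edges of each reticulation node of
the subnetwork, `D` is a set of deleted nodes, and `φ` witnesses that the result is a
subdivision of the subtree. -/
def DisplayWitness (A : V → V → Prop) (S : Set V) (AT : W → W → Prop) (SW : Set W)
    (θ : W → V) (E : Set (V × V)) (D : Set V) (φ : W → V) : Prop :=
  (∀ e ∈ E, Restrict A S e.1 e.2 ∧ 2 ≤ inDeg (Restrict A S) e.2) ∧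
  (∀ r ∈ S, 2 ≤ inDeg (Restrict A S) r →
     ∃ p, Restrict A S p r ∧ (p, r) ∉ E ∧ ∀ q, Restrict A S q r → q ≠ p → (q, r) ∈ E) ∧
  SubdivWitness (fun a b => Restrict A S a b ∧ (a, b) ∉ E) (S \ D) AT SW θ φ

/-- The subnetwork of `A` on vertex set `S` displays the subtree of `AT` on `SW`. -/
def DisplaysOn (A : V → V → Prop) (S : Set V) (AT : W → W → Prop) (SW : Set W)
    (θ : W → V) : Prop :=
  ∃ E D φ, DisplayWitness A S AT SW θ E D φ

/-- The leaves of the subnetwork of `A` induced on vertex set `S`. -/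
def SubLeaves (A : V → V → Prop) (S : Set V) : Set V :=
  {v | v ∈ S ∧ outDeg (Restrict A S) v = 0}

/-- `B` is a soft cluster in the subnetwork of `A` on vertex set `S`: `B` is the
cluster of some node of some phylogenetic tree displayed by that subnetwork. -/
def SoftClusterOn (A : V → V → Prop) (S : Set V) (B : Set V) : Prop :=
  ∃ (W : Type) (AT : W → W → Prop) (ρT : W) (θ : W → V),
    IsPhyloTree AT ρT ∧
    Set.BijOn θ {w | IsLeaf AT w} (SubLeaves A S) ∧
    DisplaysOn A S AT Set.univ θ ∧
    ∃ x : W, θ '' {w | IsLeaf AT w ∧ Relation.ReflTransGen AT x w} = B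

/-- `B` is a soft cluster of the node `u` of `N`: there are `E` and `D` as in the
definition of display such that `u` is a node of `(N − E) − D` and the set of leaves
of `N` below `u` in `(N − E) − D` equals `B`. -/
def SoftClusterAt (A : V → V → Prop) (u : V) (B : Set V) : Prop :=
  ∃ (E : Set (V × V)) (D : Set V),
    (∀ e ∈ E, A e.1 e.2 ∧ 2 ≤ inDeg A e.2) ∧
    (∀ r, 2 ≤ inDeg A r → ∃ p, A p r ∧ (p, r) ∉ E ∧ ∀ q, A q r → q ≠ p → (q, r) ∈ E) ∧
    (∃ (W : Type) (AT : W → W → Prop) (ρT : W) (θ : W → V),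
      IsPhyloTree AT ρT ∧ Set.BijOn θ {w | IsLeaf AT w} {v | IsLeaf A v} ∧
      IsSubdivisionOf (fun a b => A a b ∧ (a, b) ∉ E) (Set.univ \ D) AT Set.univ θ) ∧
    u ∉ D ∧
    {ℓ | IsLeaf A ℓ ∧
      Relation.ReflTransGen (fun a b => A a b ∧ (a, b) ∉ E ∧ a ∉ D ∧ b ∉ D) u ℓ} = B

/-- `w` is the lowest common ancestor of the set `X` in the (tree-like) digraph `A`. -/
def IsLCAIn (A : V → V → Prop) (X : Set V) (w : V) : Prop :=
  (∀ x ∈ X, Relation.ReflTransGen A w x) ∧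
  ∀ w', (∀ x ∈ X, Relation.ReflTransGen A w' x) → Relation.ReflTransGen A w' w

end PhyloNet

namespace PhyloNet

section AuxLemmas
open Relation List
variable {A : V → V → Prop} {ρ : V}

lemma aux_chain'_transGen {l : List V} {a b : V} (h : List.Chain' A (a :: l)) (hb : b ∈ l) :
    Relation.TransGen A a b := by
  induction l generalizing a with
  | nil => simp at hb
  | cons c l ih =>
    have h1 : A a c := (List.isChain_cons_cons.mp h).1
    rcases List.mem_cons.mp hb with rfl | hb'
    · exact .single h1
    · exact Relation.TransGen.head h1 (ih (List.isChain_cons_cons.mp h).2 hb')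

lemma aux_path_decomp (hac : ∀ v, ¬ Relation.TransGen A v v) {u r : V} {p : List V}
    (hp : IsPath A u r p) (hur : u ≠ r) :
    ∃ q x, p = q ++ [x, r] ∧ A x r ∧ (q ++ [x]).head? = some u ∧
      List.Chain' A (q ++ [x]) ∧ (∀ z ∈ q ++ [x], z ≠ r) := by
  obtain ⟨hc, hh, hl⟩ := hp
  obtain ⟨ys, rfl⟩ := List.getLast?_eq_some_iff.mp hl
  have hys : ys ≠ [] := by
    rintro rfl; simp at hh; exact hur hh.symm
  obtain ⟨x, hx⟩ : ∃ x, ys.getLast? = some x := by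
    cases h : ys.getLast? with
    | none => exact absurd (List.getLast?_eq_none_iff.mp h) hys
    | some x => exact ⟨x, rfl⟩
  obtain ⟨q, rfl⟩ := List.getLast?_eq_some_iff.mp hx
  have hchain : List.Chain' A (q ++ [x]) ∧ A x r := by
    simp only [List.Chain'] at hc
    rw [List.isChain_append (l₁ := q ++ [x]) (l₂ := [r])] at hc
    refine ⟨hc.1, hc.2.2 x ?_ r rfl⟩
    simp
  have hhead : (q ++ [x]).head? = some u := by
    rw [List.head?_append_of_ne_nil] at hh
    · exact hh
    · simp
  refine ⟨q, x, by simp, hchain.2, hhead, hchain.1, ?_⟩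
  intro z hz hzr
  subst hzr
  -- z occurs in q ++ [x]; derive a cycle
  obtain ⟨l₁, l₂, hsplit⟩ := List.append_of_mem hz
  have hkey : List.Chain' A (z :: (l₂ ++ [z])) := by
    have heq : (q ++ [x]) ++ [z] = l₁ ++ (z :: (l₂ ++ [z])) := by
      rw [hsplit]; simp
    have h2 := hc
    rw [heq] at h2
    exact h2.suffix (List.suffix_append _ _)
  exact hac z (aux_chain'_transGen hkey (by simp))

/-- connectivity in the tree-node subgraph -/
def Con (A : V → V → Prop) (u v : V) : Prop := Relation.ReflTransGen (TAdj A) u v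

lemma aux_tadj_symm : Symmetric (TAdj A) := fun _ _ ⟨hu, hv, h⟩ => ⟨hv, hu, h.symm⟩

lemma aux_con_symm {u v : V} (h : Con A u v) : Con A v u :=
  by haveI : Std.Symm (TAdj A) := ⟨fun _ _ h => aux_tadj_symm h⟩; show Relation.ReflTransGen (TAdj A) v u; exact Std.Symm.symm _ _ h

lemma aux_con_trans {u v w : V} (h : Con A u v) (h2 : Con A v w) : Con A u w := h.trans h2

lemma aux_chain_tadj {l : List V} (hc : List.Chain' A l) (ht : ∀ z ∈ l, IsTreeNode A z) :
    List.Chain' (TAdj A) l := by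
  induction l with
  | nil => exact List.isChain_nil
  | cons a l ih =>
    cases l with
    | nil => exact List.isChain_singleton _
    | cons b l' =>
      simp only [List.Chain', List.isChain_cons_cons] at hc ⊢
      exact ⟨⟨ht a (by simp), ht b (by simp), Or.inl hc.1⟩,
        ih hc.2 (fun z hz => ht z (by simp [hz]))⟩

lemma aux_chain'_con {l : List V} {a b : V} (h : List.Chain' (TAdj A) (a :: l))
    (hb : b ∈ a :: l) : Con A a b := by
  rcases List.mem_cons.mp hb with rfl | hb'
  · exact Relation.ReflTransGen.refl
  · exact (aux_chain'_transGen h hb').to_reflTransGen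

/-- The two parents of a reticulation in a galled bicombining network. -/
lemma aux_gall_parents (hN : IsNetwork A ρ) (hbi : Bicombining A) (hg : Galled A)
    {r : V} (hr : IsRet A r) :
    ∃ x₁ x₂, x₁ ≠ x₂ ∧ IsTreeNode A x₁ ∧ IsTreeNode A x₂ ∧ A x₁ r ∧ A x₂ r ∧
      (∀ p, A p r → p = x₁ ∨ p = x₂) ∧ Con A x₁ x₂ := by
  obtain ⟨u, hur, p₁, p₂, hp₁, hp₂, hne, hdisj, ht₁, ht₂⟩ := hg r hr
  have hu_ne : u ≠ r := by intro h; rw [h] at hur; exact hN.acyclic r hur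
  obtain ⟨q₁, x₁, hpe₁, hx₁r, hh₁, hc₁, hnr₁⟩ := aux_path_decomp hN.acyclic hp₁ hu_ne
  obtain ⟨q₂, x₂, hpe₂, hx₂r, hh₂, hc₂, hnr₂⟩ := aux_path_decomp hN.acyclic hp₂ hu_ne
  have hmem₁ : x₁ ∈ p₁ := by rw [hpe₁]; simp
  have hmem₂ : x₂ ∈ p₂ := by rw [hpe₂]; simp
  have htx₁ : IsTreeNode A x₁ := ht₁ x₁ hmem₁ (hnr₁ x₁ (by simp))
  have htx₂ : IsTreeNode A x₂ := ht₂ x₂ hmem₂ (hnr₂ x₂ (by simp))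
  -- each q_i ++ [x_i] consists of tree nodes
  have htq₁ : ∀ z ∈ q₁ ++ [x₁], IsTreeNode A z := fun z hz =>
    ht₁ z (by rw [hpe₁]; simp at hz ⊢; tauto) (hnr₁ z hz)
  have htq₂ : ∀ z ∈ q₂ ++ [x₂], IsTreeNode A z := fun z hz =>
    ht₂ z (by rw [hpe₂]; simp at hz ⊢; tauto) (hnr₂ z hz)
  -- connectivity from u to x_i
  have hcon : ∀ (q : List V) (x : V), (q ++ [x]).head? = some u →
      List.Chain' A (q ++ [x]) → (∀ z ∈ q ++ [x], IsTreeNode A z) → Con A u x := by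
    intro q x hh hc ht
    have htc := aux_chain_tadj hc ht
    cases q with
    | nil => simp at hh; rw [hh]; exact .refl
    | cons a q' =>
      simp at hh
      subst hh
      exact aux_chain'_con (by simpa using htc) (by simp)
  have hcon₁ : Con A u x₁ := hcon q₁ x₁ hh₁ hc₁ htq₁
  have hcon₂ : Con A u x₂ := hcon q₂ x₂ hh₂ hc₂ htq₂
  -- distinctness
  have hx12 : x₁ ≠ x₂ := by
    intro he
    have hx1u : x₁ = u := by
      rcases hdisj x₁ hmem₁ (he ▸ hmem₂) with h | h
      · exact h
      · exact absurd h (hnr₁ x₁ (by simp))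
    have hx2u : x₂ = u := he ▸ hx1u
    have hq : ∀ (q : List V) (x : V), x = u → (q ++ [x]).head? = some u →
        List.Chain' A (q ++ [x, r]) → q = [] := by
      intro q x hxu hh hc
      cases q with
      | nil => rfl
      | cons a q' =>
        exfalso
        have ha : a = u := by simpa using hh
        have hch : List.Chain' A (a :: (q' ++ [x, r])) := by simpa using hc
        have htg := aux_chain'_transGen hch (show x ∈ q' ++ [x, r] by simp)
        rw [ha, hxu] at htg
        exact hN.acyclic u htg
    have hq₁ := hq q₁ x₁ hx1u hh₁ (hpe₁ ▸ hp₁.1)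
    have hq₂ := hq q₂ x₂ hx2u hh₂ (hpe₂ ▸ hp₂.1)
    apply hne
    rw [hpe₁, hpe₂, hq₁, hq₂, he]
  -- completeness of parents
  have hpar : ∀ p, A p r → p = x₁ ∨ p = x₂ := by
    intro p hp
    have h2 : ({u | A u r} : Set V).ncard = 2 := hbi r hr
    obtain ⟨a, b, hab, hset⟩ := Set.ncard_eq_two.mp h2
    have m1 : x₁ ∈ ({a, b} : Set V) := hset ▸ hx₁r
    have m2 : x₂ ∈ ({a, b} : Set V) := hset ▸ hx₂r
    have mp : p ∈ ({a, b} : Set V) := hset ▸ hp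
    simp at m1 m2 mp
    rcases m1 with rfl | rfl <;> rcases m2 with rfl | rfl <;> tauto
  exact ⟨x₁, x₂, hx12, htx₁, htx₂, hx₁r, hx₂r, hpar, aux_con_trans (aux_con_symm hcon₁) hcon₂⟩

lemma aux_no_parent_root (hN : IsNetwork A ρ) (u : V) : ¬ A u ρ := by
  intro h
  have hfin := hN.finite
  have : ({u | A u ρ} : Set V) = ∅ := by
    rw [← Set.ncard_eq_zero (Set.toFinite _)]; exact hN.root_indeg
  exact absurd (this ▸ h : u ∈ (∅ : Set V)) (by simp)

lemma aux_parent_unique (hv : inDeg A v = 1) {a b : V} (ha : A a v) (hb : A b v) : a = b := by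
  obtain ⟨c, hc⟩ := Set.ncard_eq_one.mp hv
  have h1 : a ∈ ({c} : Set V) := hc ▸ ha
  have h2 : b ∈ ({c} : Set V) := hc ▸ hb
  simp at h1 h2; rw [h1, h2]

lemma aux_root_tree (hN : IsNetwork A ρ) : IsTreeNode A ρ := by
  intro ⟨h, _⟩; rw [hN.root_indeg] at h; omega

lemma aux_tree_indeg_one (hN : IsNetwork A ρ) {v : V} (hv : IsTreeNode A v) (hρ : v ≠ ρ) :
    inDeg A v = 1 := by
  rcases hN.degree_cond v hρ with ⟨h, _⟩ | h
  · exact h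
  · exact absurd h hv

/-- component root -/
def CRootP (A : V → V → Prop) (t : V) : Prop :=
  IsTreeNode A t ∧ ∀ u, IsTreeNode A u → ¬ A u t

lemma aux_wf (hN : IsNetwork A ρ) : WellFounded (fun a b : V => A a b) := by
  have hfin := hN.finite
  haveI : IsTrans V (fun a b : V => Relation.TransGen A a b) := ⟨fun _ _ _ h1 h2 => h1.trans h2⟩
  haveI : IsIrrefl V (fun a b : V => Relation.TransGen A a b) := ⟨fun a h => hN.acyclic a h⟩
  exact Subrelation.wf (fun h => Relation.TransGen.single h)
    (Finite.wellFounded_of_trans_of_irrefl _)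

lemma aux_wf_down (hN : IsNetwork A ρ) : WellFounded (fun a b : V => A b a) := by
  have hfin := hN.finite
  haveI : IsTrans V (fun a b : V => Relation.TransGen A b a) := ⟨fun _ _ _ h1 h2 => h2.trans h1⟩
  haveI : IsIrrefl V (fun a b : V => Relation.TransGen A b a) := ⟨fun a h => hN.acyclic a h⟩
  exact Subrelation.wf (fun h => Relation.TransGen.single h)
    (Finite.wellFounded_of_trans_of_irrefl _)

lemma aux_exists_croot (hN : IsNetwork A ρ) :
    ∀ v, IsTreeNode A v → ∃ t, CRootP A t ∧ Con A t v := by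
  intro v
  induction v using (aux_wf hN).induction with
  | _ v ih =>
    intro hv
    by_cases h : ∃ u, IsTreeNode A u ∧ A u v
    · obtain ⟨u, hu, huv⟩ := h
      obtain ⟨t, ht, hcon⟩ := ih u huv hu
      exact ⟨t, ht, hcon.tail ⟨hu, hv, Or.inl huv⟩⟩
    · push_neg at h
      exact ⟨v, ⟨hv, h⟩, .refl⟩

/-- if `t` is a component root connected to `v`, then `t` reaches `v` by tree edges -/
lemma aux_down_of_con (hN : IsNetwork A ρ) {t v : V} (ht : CRootP A t) (hcon : Con A t v) :
    Relation.ReflTransGen (fun a b => A a b ∧ IsTreeNode A a ∧ IsTreeNode A b) t v := by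
  induction hcon with
  | refl => exact .refl
  | tail hcon₁ hadj ih =>
    rename_i u v
    obtain ⟨hu, hv, h | h⟩ := hadj
    · exact ih.tail ⟨h, hu, hv⟩
    · -- v is a tree parent of u
      rcases Relation.ReflTransGen.cases_tail ih with heq | ⟨w, hw, hwu⟩
      · exact absurd h (ht.2 v hv ∘ (heq ▸ id))
      · have huρ : u ≠ ρ := fun he => aux_no_parent_root hN v (he ▸ h)
        have : w = v := aux_parent_unique (aux_tree_indeg_one hN hu huρ) hwu.1 h
        exact this ▸ hw

lemma aux_croot_unique (hN : IsNetwork A ρ) {t₁ t₂ : V} (h₁ : CRootP A t₁) (h₂ : CRootP A t₂)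
    (hcon : Con A t₁ t₂) : t₁ = t₂ := by
  rcases Relation.ReflTransGen.cases_tail (aux_down_of_con hN h₁ hcon) with heq | ⟨w, _, hw⟩
  · exact heq.symm
  · exact absurd hw.1 (h₂.2 w hw.2.1)

/-- every tree node connected to `t` leads down to a component sink -/
lemma aux_sink (hN : IsNetwork A ρ) {t : V} :
    ∀ v, IsTreeNode A v → Con A t v →
      ∃ s, IsTreeNode A s ∧ Con A t s ∧ ∀ w, A s w → ¬ IsTreeNode A w := by
  intro v
  induction v using (aux_wf_down hN).induction with
  | _ v ih =>
    intro hv hcon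
    by_cases h : ∃ w, A v w ∧ IsTreeNode A w
    · obtain ⟨w, hvw, hw⟩ := h
      exact ih w hvw hw (hcon.tail ⟨hv, hw, Or.inl hvw⟩)
    · push_neg at h
      exact ⟨v, hv, hcon, h⟩

lemma aux_leaf_tree {V : Type} {A : V → V → Prop} {v : V} (h : IsLeaf A v) :
    IsTreeNode A v := fun hret => by have h1 := h.2; have h2 := hret.2; omega

end AuxLemmas

/-- Every galled network with `n` leaves has at most `6n − 5` nodes in total. -/
theorem galled_node_bound {V : Type} (A : V → V → Prop) (ρ : V)
    (hN : IsNetwork A ρ) (hbi : Bicombining A) (hg : Galled A)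
    (n : ℕ) (hn : {v | IsLeaf A v}.ncard = n) :
    Nat.card V ≤ 6 * n - 5 := by
  classical
  have hfin := hN.finite
  haveI : Fintype V := Fintype.ofFinite V
  -- degrees as Finset cards
  have hin : ∀ v, inDeg A v = (Finset.univ.filter (fun u => A u v)).card := by
    intro v; rw [inDeg, ← Set.ncard_coe_finset]; congr 1; ext u; simp
  have hout : ∀ v, outDeg A v = (Finset.univ.filter (fun w => A v w)).card := by
    intro v; rw [outDeg, ← Set.ncard_coe_finset]; congr 1; ext u; simp
  have hsum : ∑ v, inDeg A v = ∑ v, outDeg A v := by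
    simp only [hin, hout, Finset.card_filter]
    exact Finset.sum_comm
  -- the four classes of nodes
  set Lf : Finset V := Finset.univ.filter (fun v => IsLeaf A v) with hLf
  set Rf : Finset V := Finset.univ.filter (fun v => IsRet A v) with hRf
  set If : Finset V := Finset.univ.filter
    (fun v => v ≠ ρ ∧ inDeg A v = 1 ∧ 2 ≤ outDeg A v) with hIf
  have hmemL : ∀ v, v ∈ Lf ↔ IsLeaf A v := by intro v; simp [hLf]
  have hmemR : ∀ v, v ∈ Rf ↔ IsRet A v := by intro v; simp [hRf]
  have hmemI : ∀ v, v ∈ If ↔ v ≠ ρ ∧ inDeg A v = 1 ∧ 2 ≤ outDeg A v := by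
    intro v; simp [hIf]
  have hLn : Lf.card = n := by
    rw [← hn, ← Set.ncard_coe_finset]; congr 1; ext v; simp [hLf]
  -- disjointness
  have hrhonot : ρ ∉ (Lf ∪ Rf) ∪ If := by
    intro hmem
    have h0 := hN.root_indeg
    rcases Finset.mem_union.mp hmem with h | h
    · rcases Finset.mem_union.mp h with h | h
      · have := ((hmemL ρ).mp h).1; omega
      · have := ((hmemR ρ).mp h).1; omega
    · exact ((hmemI ρ).mp h).1 rfl
  have hLR : Disjoint Lf Rf := by
    rw [Finset.disjoint_left]
    intro v hv hv'
    rw [hmemL v] at hv; rw [hmemR v] at hv'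
    have := hv.2; have := hv'.2; omega
  have hLRI : Disjoint (Lf ∪ Rf) If := by
    rw [Finset.disjoint_left]
    intro v hv hv'
    rw [hmemI v] at hv'
    rcases Finset.mem_union.mp hv with h | h
    · rw [hmemL v] at h; have := h.2; have := hv'.2.2; omega
    · rw [hmemR v] at h; have := h.1; have := hv'.2.1; omega
  have hcover : (Finset.univ : Finset V) = insert ρ ((Lf ∪ Rf) ∪ If) := by
    apply Finset.Subset.antisymm
    swap
    · exact Finset.subset_univ _
    · intro v _
      by_cases hvρ : v = ρ
      · simp [hvρ]
      · rcases hN.degree_cond v hvρ with ⟨h1, h0 | h2⟩ | hret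
        · simp only [Finset.mem_insert, Finset.mem_union, hmemL v]
          exact Or.inr (Or.inl (Or.inl ⟨h1, h0⟩))
        · simp only [Finset.mem_insert, Finset.mem_union, hmemI v]
          exact Or.inr (Or.inr ⟨hvρ, h1, h2⟩)
        · simp only [Finset.mem_insert, Finset.mem_union, hmemR v]
          exact Or.inr (Or.inl (Or.inr hret))
  have hcard : Fintype.card V = 1 + (Lf.card + Rf.card + If.card) := by
    rw [← Finset.card_univ, hcover, Finset.card_insert_of_notMem hrhonot,
      Finset.card_union_of_disjoint hLRI, Finset.card_union_of_disjoint hLR]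
    omega
  -- in-degree sum, exactly
  have hsum_in : ∑ v, inDeg A v = Lf.card + 2 * Rf.card + If.card := by
    rw [show (Finset.univ : Finset V) = insert ρ ((Lf ∪ Rf) ∪ If) from hcover,
      Finset.sum_insert hrhonot, Finset.sum_union hLRI, Finset.sum_union hLR]
    have h1 : ∑ v ∈ Lf, inDeg A v = Lf.card := by
      rw [Finset.sum_congr rfl (fun v hv => ((hmemL v).mp hv).1), Finset.sum_const, smul_eq_mul,
        mul_one]
    have h2 : ∑ v ∈ Rf, inDeg A v = 2 * Rf.card := by
      rw [Finset.sum_congr rfl (fun v hv => hbi v ((hmemR v).mp hv)), Finset.sum_const,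
        smul_eq_mul, mul_comm]
    have h3 : ∑ v ∈ If, inDeg A v = If.card := by
      rw [Finset.sum_congr rfl (fun v hv => ((hmemI v).mp hv).2.1), Finset.sum_const,
        smul_eq_mul, mul_one]
    rw [h1, h2, h3, hN.root_indeg]
    omega
  -- out-degree sum, lower bound
  have hsum_out : 2 + (Rf.card + 2 * If.card) ≤ ∑ v, outDeg A v := by
    rw [show (Finset.univ : Finset V) = insert ρ ((Lf ∪ Rf) ∪ If) from hcover,
      Finset.sum_insert hrhonot, Finset.sum_union hLRI, Finset.sum_union hLR]
    have h2 : ∑ v ∈ Rf, outDeg A v = Rf.card := by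
      rw [Finset.sum_congr rfl (fun v hv => ((hmemR v).mp hv).2), Finset.sum_const, smul_eq_mul,
        mul_one]
    have h3 : 2 * If.card ≤ ∑ v ∈ If, outDeg A v := by
      calc 2 * If.card = ∑ _v ∈ If, 2 := by rw [Finset.sum_const, smul_eq_mul, mul_comm]
      _ ≤ ∑ v ∈ If, outDeg A v := Finset.sum_le_sum (fun v hv => ((hmemI v).mp hv).2.2)
    have hroot := hN.root_outdeg
    omega
  have hdeg : Lf.card + 2 * Rf.card + If.card ≥ 2 + (Rf.card + 2 * If.card) := by
    rw [← hsum_in]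
    calc 2 + (Rf.card + 2 * If.card) ≤ ∑ v, outDeg A v := hsum_out
    _ = ∑ v, inDeg A v := hsum.symm
  -- component roots
  set CRf : Finset V := Finset.univ.filter (fun t => CRootP A t) with hCRf
  have hmemCR : ∀ t, t ∈ CRf ↔ CRootP A t := by intro t; simp [hCRf]
  have hρCR : ρ ∈ CRf := (hmemCR ρ).mpr
    ⟨aux_root_tree hN, fun u _ => aux_no_parent_root hN u⟩
  -- every reticulation has a unique child which is a non-root component root
  have hchild : ∀ r, IsRet A r → ∃ c, A r c ∧ ∀ w, A r w → w = c := by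
    intro r hr
    obtain ⟨c, hc⟩ := Set.ncard_eq_one.mp hr.2
    refine ⟨c, ?_, ?_⟩
    · have : c ∈ ({w | A r w} : Set V) := by rw [hc]; rfl
      exact this
    · intro w hw
      have : w ∈ ({c} : Set V) := hc ▸ hw
      simpa using this
  have hretchild : ∀ r, IsRet A r → ∀ c, A r c → CRootP A c ∧ c ≠ ρ := by
    intro r hr c hc
    have hcρ : c ≠ ρ := fun he => aux_no_parent_root hN r (he ▸ hc)
    have hct : IsTreeNode A c := by
      intro hcret
      obtain ⟨x₁, x₂, _, ht₁, ht₂, _, _, hall, _⟩ := aux_gall_parents hN hbi hg hcret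
      rcases hall r hc with rfl | rfl
      · exact ht₁ hr
      · exact ht₂ hr
    refine ⟨⟨hct, fun u hu hua => ?_⟩, hcρ⟩
    have : u = r := aux_parent_unique (aux_tree_indeg_one hN hct hcρ) hua hc
    rw [this] at hu; exact hu hr
  choose ch hch1 hch2 using fun r (hr : r ∈ Rf) => hchild r ((hmemR r).mp hr)
  have hRC : Rf.card = (CRf.erase ρ).card := by
    apply Finset.card_bij (fun r hr => ch r hr)
    · intro r hr
      obtain ⟨hcr, hne⟩ := hretchild r ((hmemR r).mp hr) (ch r hr) (hch1 r hr)
      exact Finset.mem_erase.mpr ⟨hne, (hmemCR _).mpr hcr⟩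
    · intro r₁ hr₁ r₂ hr₂ heq
      obtain ⟨hcr, hne⟩ := hretchild r₁ ((hmemR r₁).mp hr₁) (ch r₁ hr₁) (hch1 r₁ hr₁)
      have h1 : A r₁ (ch r₁ hr₁) := hch1 r₁ hr₁
      have h2 : A r₂ (ch r₁ hr₁) := heq ▸ hch1 r₂ hr₂
      exact aux_parent_unique (aux_tree_indeg_one hN hcr.1 hne) h1 h2
    · intro t ht
      obtain ⟨htρ, htc⟩ := Finset.mem_erase.mp ht
      have hcr := (hmemCR t).mp htc
      have hdeg1 : inDeg A t = 1 := aux_tree_indeg_one hN hcr.1 htρ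
      obtain ⟨p, hp⟩ := Set.ncard_eq_one.mp hdeg1
      have hpt : A p t := by
        have : p ∈ ({u | A u t} : Set V) := by rw [hp]; rfl
        exact this
      have hpret : IsRet A p := by
        by_contra hptree
        exact hcr.2 p hptree hpt
      have hpR : p ∈ Rf := (hmemR p).mpr hpret
      exact ⟨p, hpR, (hch2 p hpR t hpt).symm⟩
  have hCRcard : CRf.card = Rf.card + 1 := by
    rw [hRC]; exact (Finset.card_erase_add_one hρCR).symm
  -- classification of component roots
  have hclass : ∀ t ∈ CRf, (∃ ℓ, IsLeaf A ℓ ∧ Con A t ℓ) ∨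
      (∃ r₁ r₂, r₁ ≠ r₂ ∧ r₁ ∈ Rf ∧ r₂ ∈ Rf ∧
        (∃ p, A p r₁ ∧ IsTreeNode A p ∧ Con A t p) ∧
        (∃ p, A p r₂ ∧ IsTreeNode A p ∧ Con A t p)) := by
    intro t htm
    have ht := (hmemCR t).mp htm
    obtain ⟨s, hs, hcon, hsink⟩ := aux_sink hN t ht.1 Relation.ReflTransGen.refl
    by_cases hls : outDeg A s = 0
    · left
      have hsρ : s ≠ ρ := by rintro rfl; have := hN.root_outdeg; omega
      exact ⟨s, ⟨aux_tree_indeg_one hN hs hsρ, hls⟩, hcon⟩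
    · right
      have h2 : 2 ≤ outDeg A s := by
        by_cases hsρ : s = ρ
        · rw [hsρ]; exact hN.root_outdeg
        · rcases hN.degree_cond s hsρ with ⟨_, h0 | h2⟩ | hret
          · exact absurd h0 hls
          · exact h2
          · exact absurd hret hs
      obtain ⟨w₁, hw₁, w₂, hw₂, hne⟩ := (Set.one_lt_ncard (Set.toFinite _)).mp (by
        show 1 < outDeg A s
        omega)
      have hr₁ : IsRet A w₁ := not_not.mp (fun h => (hsink w₁ hw₁) h)
      have hr₂ : IsRet A w₂ := not_not.mp (fun h => (hsink w₂ hw₂) h)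
      exact ⟨w₁, w₂, hne, (hmemR w₁).mpr hr₁, (hmemR w₂).mpr hr₂,
        ⟨s, hw₁, hs, hcon⟩, ⟨s, hw₂, hs, hcon⟩⟩
  -- a reticulation determines its parents' component root uniquely
  have hRelU : ∀ r ∈ Rf, ∀ t₁ ∈ CRf, ∀ t₂ ∈ CRf,
      (∃ p, A p r ∧ IsTreeNode A p ∧ Con A t₁ p) →
      (∃ p, A p r ∧ IsTreeNode A p ∧ Con A t₂ p) → t₁ = t₂ := by
    rintro r hr t₁ ht₁ t₂ ht₂ ⟨p₁, hp₁, _, hc₁⟩ ⟨p₂, hp₂, _, hc₂⟩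
    obtain ⟨x₁, x₂, _, _, _, _, _, hall, hx⟩ :=
      aux_gall_parents hN hbi hg ((hmemR r).mp hr)
    have hp12 : Con A p₁ p₂ := by
      rcases hall p₁ hp₁ with rfl | rfl <;> rcases hall p₂ hp₂ with rfl | rfl
      · exact Relation.ReflTransGen.refl
      · exact hx
      · exact aux_con_symm hx
      · exact Relation.ReflTransGen.refl
    exact aux_croot_unique hN ((hmemCR t₁).mp ht₁) ((hmemCR t₂).mp ht₂)
      (aux_con_trans hc₁ (aux_con_trans hp12 (aux_con_symm hc₂)))
  -- split component roots
  have hsplit : (CRf.filter (fun t => ∃ ℓ, IsLeaf A ℓ ∧ Con A t ℓ)).card +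
      (CRf.filter (fun t => ¬ ∃ ℓ, IsLeaf A ℓ ∧ Con A t ℓ)).card = CRf.card :=
    Finset.card_filter_add_card_filter_not _
  have hA : (CRf.filter (fun t => ∃ ℓ, IsLeaf A ℓ ∧ Con A t ℓ)).card ≤ Lf.card := by
    apply Finset.card_le_card_of_injOn
      (fun t => if h : ∃ ℓ, IsLeaf A ℓ ∧ Con A t ℓ then h.choose else t)
    · intro t ht
      have h := (Finset.mem_filter.mp ht).2
      dsimp only
      rw [dif_pos h]
      exact (hmemL _).mpr h.choose_spec.1
    · intro t₁ h₁ t₂ h₂ heq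
      simp only [Finset.coe_filter, Set.mem_setOf_eq] at h₁ h₂
      dsimp only at heq
      rw [dif_pos h₁.2, dif_pos h₂.2] at heq
      have hs₁ := h₁.2.choose_spec
      have hs₂ := h₂.2.choose_spec
      have hℓt : IsTreeNode A h₁.2.choose := aux_leaf_tree hs₁.1
      have hcon : Con A t₁ t₂ :=
        aux_con_trans hs₁.2 (aux_con_symm (heq ▸ hs₂.2))
      exact aux_croot_unique hN ((hmemCR t₁).mp h₁.1) ((hmemCR t₂).mp h₂.1) hcon
  have hB : 2 * (CRf.filter (fun t => ¬ ∃ ℓ, IsLeaf A ℓ ∧ Con A t ℓ)).card ≤ Rf.card := by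
    set CRb := CRf.filter (fun t => ¬ ∃ ℓ, IsLeaf A ℓ ∧ Con A t ℓ) with hCRb
    set g : V → Finset V :=
      fun t => Rf.filter (fun r => ∃ p, A p r ∧ IsTreeNode A p ∧ Con A t p) with hg'
    have hdisj : ∀ t₁ ∈ CRb, ∀ t₂ ∈ CRb, t₁ ≠ t₂ → Disjoint (g t₁) (g t₂) := by
      intro t₁ ht₁ t₂ ht₂ hne
      rw [Finset.disjoint_left]
      intro r hr₁ hr₂
      have hm₁ := Finset.mem_filter.mp hr₁
      have hm₂ := Finset.mem_filter.mp hr₂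
      exact hne (hRelU r hm₁.1 t₁ (Finset.mem_of_mem_filter t₁ ht₁)
        t₂ (Finset.mem_of_mem_filter t₂ ht₂) hm₁.2 hm₂.2)
    calc 2 * CRb.card = ∑ _t ∈ CRb, 2 := by rw [Finset.sum_const, smul_eq_mul, mul_comm]
    _ ≤ ∑ t ∈ CRb, (g t).card := by
        apply Finset.sum_le_sum
        intro t ht
        have htCR := Finset.mem_of_mem_filter t ht
        have hnl := (Finset.mem_filter.mp ht).2
        rcases hclass t htCR with h | ⟨r₁, r₂, hner, hr₁, hr₂, hrel₁, hrel₂⟩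
        · exact absurd h hnl
        · exact Finset.one_lt_card.mpr ⟨r₁, Finset.mem_filter.mpr ⟨hr₁, hrel₁⟩,
            r₂, Finset.mem_filter.mpr ⟨hr₂, hrel₂⟩, hner⟩
    _ = (CRb.biUnion g).card := (Finset.card_biUnion hdisj).symm
    _ ≤ Rf.card := Finset.card_le_card (fun r hr => by
        obtain ⟨t, _, hrt⟩ := Finset.mem_biUnion.mp hr
        exact Finset.mem_of_mem_filter r hrt)
  rw [Nat.card_eq_fintype_card, hcard]
  omega

end PhyloNet
end

section
/- Let N be a reticulation-visible network. Then the number of reticulation nodes of N equals the number of tree node components of N minus one. -/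
namespace PhyloNet

section Aux

variable {V : Type} {A : V → V → Prop} {ρ : V}

lemma exists_unique_child (_ : Finite V) {r : V} (h : outDeg A r = 1) :
    ∃ c, A r c ∧ ∀ w, A r w → w = c := by
  rw [outDeg, Set.ncard_eq_one] at h
  obtain ⟨c, hc⟩ := h
  refine ⟨c, ?_, fun w hw => ?_⟩
  · have : c ∈ ({c} : Set V) := rfl
    rw [← hc] at this; exact this
  · have : w ∈ ({w | A r w} : Set V) := hw
    rw [hc] at this; exact this

lemma indeg_pos (_ : Finite V) {u v : V} (h : A u v) : 1 ≤ inDeg A v := by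
  have hne : ({u' | A u' v} : Set V).Nonempty := ⟨u, h⟩
  have := (Set.ncard_pos (Set.toFinite _)).mpr hne
  exact this

lemma exists_other_parent (_ : Finite V) {r u : V} (h : 2 ≤ inDeg A r) (hu : A u r) :
    ∃ q, A q r ∧ q ≠ u := by
  by_contra hC
  push_neg at hC
  have hsub : {p | A p r} ⊆ {u} := fun p hp => hC p hp
  have hle := Set.ncard_le_ncard hsub (Set.finite_singleton u)
  rw [Set.ncard_singleton] at hle
  rw [inDeg] at h
  omega

lemma path_of_rtg {u v : V} (h : Relation.ReflTransGen A u v) :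
    ∃ p, IsPath A u v p ∧
      ∀ x ∈ p, Relation.ReflTransGen A u x ∧ Relation.ReflTransGen A x v := by
  induction h with
  | refl =>
    refine ⟨[u], ⟨List.isChain_singleton u, rfl, rfl⟩, fun x hx => ?_⟩
    simp at hx
    subst hx
    exact ⟨Relation.ReflTransGen.refl, Relation.ReflTransGen.refl⟩
  | @tail b c hub hbc ih =>
    obtain ⟨p, ⟨hch, hh, hl⟩, hmem⟩ := ih
    refine ⟨p ++ [c], ⟨?_, ?_, ?_⟩, ?_⟩
    · show List.IsChain A (p ++ [c])
      rw [List.isChain_append]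
      refine ⟨hch, List.isChain_singleton c, fun x hx y hy => ?_⟩
      rw [hl] at hx
      simp at hx hy
      rw [← hx, ← hy]; exact hbc
    · have hpne : p ≠ [] := by intro h0; rw [h0] at hh; simp at hh
      rw [List.head?_append_of_ne_nil _ hpne]; exact hh
    · simp
    · intro x hx
      rcases List.mem_append.mp hx with hx | hx
      · exact ⟨(hmem x hx).1, ((hmem x hx).2).tail hbc⟩
      · simp at hx
        exact ⟨hx ▸ (hub.tail hbc), hx ▸ Relation.ReflTransGen.refl⟩

lemma path_append {a b c d : V} {p q : List V} (hp : IsPath A a b p) (hq : IsPath A c d q)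
    (hbc : A b c) : IsPath A a d (p ++ q) := by
  obtain ⟨hch1, hh1, hl1⟩ := hp
  obtain ⟨hch2, hh2, hl2⟩ := hq
  have hpne : p ≠ [] := by intro h0; rw [h0] at hh1; simp at hh1
  have hqne : q ≠ [] := by intro h0; rw [h0] at hh2; simp at hh2
  refine ⟨?_, ?_, ?_⟩
  · show List.IsChain A (p ++ q)
    rw [List.isChain_append]
    refine ⟨hch1, hch2, fun x hx y hy => ?_⟩
    rw [hl1] at hx; rw [hh2] at hy
    simp at hx hy
    rw [← hx, ← hy]; exact hbc
  · rw [List.head?_append_of_ne_nil _ hpne]; exact hh1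
  · rw [List.getLast?_append_of_ne_nil _ hqne]; exact hl2

/-- In a reticulation-visible network, the child of a reticulation is not a reticulation. -/
lemma child_not_ret (hN : IsNetwork A ρ) (hRV : RetVisible A ρ) {r₁ r₂ : V}
    (h1 : IsRet A r₁) (h12 : A r₁ r₂) : ¬ IsRet A r₂ := by
  intro h2
  have hfin := hN.finite
  obtain ⟨ℓ, hℓ, hvis⟩ := hRV r₁ h1
  obtain ⟨c, hc, hcu0⟩ := exists_unique_child hfin h1.2
  have hcu : ∀ w, A r₁ w → w = r₂ := fun w hw => (hcu0 w hw).trans (hcu0 r₂ h12).symm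
  -- ℓ is below r₁
  obtain ⟨p, hp, hpmem⟩ := path_of_rtg (hN.reach_from_root ℓ)
  have hbelow : Relation.ReflTransGen A r₁ ℓ := (hpmem r₁ (hvis p hp)).2
  have hne : r₁ ≠ ℓ := by
    intro h0
    rw [h0] at h1
    have h1' := h1.2
    have h2' := hℓ.2
    omega
  -- hence ℓ is below r₂
  have hb2 : Relation.ReflTransGen A r₂ ℓ := by
    rcases hbelow.cases_head with h0 | ⟨c', hc', hrest⟩
    · exact absurd h0 hne
    · rw [hcu c' hc'] at hrest; exact hrest
  -- another parent of r₂
  obtain ⟨q, hq, hqne⟩ := exists_other_parent hfin h2.1 h12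
  obtain ⟨p1, hp1, hm1⟩ := path_of_rtg (hN.reach_from_root q)
  obtain ⟨p2, hp2, hm2⟩ := path_of_rtg hb2
  have hr1p1 : r₁ ∉ p1 := by
    intro hmem
    have hr1q : Relation.ReflTransGen A r₁ q := (hm1 r₁ hmem).2
    rcases hr1q.cases_head with h0 | ⟨c', hc', hrest⟩
    · exact hqne h0.symm
    · rw [hcu c' hc'] at hrest
      exact hN.acyclic r₂ (Relation.TransGen.tail' hrest hq)
  have hr1p2 : r₁ ∉ p2 := by
    intro hmem
    have : Relation.ReflTransGen A r₂ r₁ := (hm2 r₁ hmem).1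
    exact hN.acyclic r₂ (Relation.TransGen.tail' this h12)
  have hfull : IsPath A ρ ℓ (p1 ++ p2) := path_append hp1 hp2 hq
  rcases List.mem_append.mp (hvis _ hfull) with h | h
  · exact hr1p1 h
  · exact hr1p2 h

/-- Directed edges between tree nodes. -/
def TEdge (A : V → V → Prop) (u v : V) : Prop :=
  IsTreeNode A u ∧ IsTreeNode A v ∧ A u v

/-- No tree-node parent. -/
def NoTreeParent (A : V → V → Prop) (v : V) : Prop :=
  ∀ t, IsTreeNode A t → ¬ A t v

/-- `a` is the apex of `v`: a tree node with no tree parent, from which `v` is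
reachable via tree edges. -/
def Apex (A : V → V → Prop) (a v : V) : Prop :=
  IsTreeNode A a ∧ NoTreeParent A a ∧ Relation.ReflTransGen (TEdge A) a v

lemma wf_A (hN : IsNetwork A ρ) : WellFounded (fun u v : V => A u v) := by
  have hfin := hN.finite
  have ht : IsTrans V (Relation.TransGen A) := ⟨fun _ _ _ => Relation.TransGen.trans⟩
  have hi : IsIrrefl V (Relation.TransGen A) := ⟨fun v h => hN.acyclic v h⟩
  exact Subrelation.wf (fun h => Relation.TransGen.single h)
    (Finite.wellFounded_of_trans_of_irrefl _)

lemma parent_unique (hN : IsNetwork A ρ) {v p q : V} (hv : IsTreeNode A v)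
    (hp : A p v) (hq : A q v) : p = q := by
  have hfin := hN.finite
  have hvρ : v ≠ ρ := by
    rintro rfl
    have := indeg_pos hfin hp
    rw [hN.root_indeg] at this
    omega
  rcases hN.degree_cond v hvρ with ⟨h1, _⟩ | ⟨h2, h3⟩
  · rw [inDeg, Set.ncard_eq_one] at h1
    obtain ⟨a, ha⟩ := h1
    have hp' : p ∈ ({a} : Set V) := ha ▸ hp
    have hq' : q ∈ ({a} : Set V) := ha ▸ hq
    simp at hp' hq'
    rw [hp', hq']
  · exact absurd ⟨h2, h3⟩ hv

lemma apex_exists (hN : IsNetwork A ρ) {v : V} (hv : IsTreeNode A v) :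
    ∃ a, Apex A a v := by
  refine (wf_A hN).induction (C := fun v => IsTreeNode A v → ∃ a, Apex A a v) v ?_ hv
  intro x ih hx
  by_cases hpl : NoTreeParent A x
  · exact ⟨x, hx, hpl, Relation.ReflTransGen.refl⟩
  · have : ∃ t, IsTreeNode A t ∧ A t x := by
      by_contra hC
      push_neg at hC
      exact hpl fun t ht hA => hC t ht hA
    obtain ⟨t, ht, htx⟩ := this
    obtain ⟨a, ha1, ha2, ha3⟩ := ih t htx ht
    exact ⟨a, ha1, ha2, ha3.tail ⟨ht, hx, htx⟩⟩

lemma apex_unique_aux (hN : IsNetwork A ρ) {a v : V} (ha2 : NoTreeParent A a)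
    (h : Relation.ReflTransGen (TEdge A) a v) :
    ∀ b, Apex A b v → a = b := by
  induction h with
  | refl =>
    intro b hb
    rcases hb.2.2.cases_tail with h0 | ⟨c, _, hc2⟩
    · exact h0
    · exact absurd hc2.2.2 (ha2 c hc2.1)
  | @tail m w _ hedge ih =>
    intro b hb
    rcases hb.2.2.cases_tail with h0 | ⟨c, hc1, hc2⟩
    · exfalso
      exact hb.2.1 m hedge.1 (h0 ▸ hedge.2.2)
    · have hcm : c = m := parent_unique hN hedge.2.1 hc2.2.2 hedge.2.2
      exact ih b ⟨hb.1, hb.2.1, hcm ▸ hc1⟩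

lemma apex_step (hN : IsNetwork A ρ) {a x y : V} (hx : Apex A a x) (hxy : TAdj A x y) :
    Apex A a y := by
  obtain ⟨htx, hty, h | h⟩ := hxy
  · exact ⟨hx.1, hx.2.1, hx.2.2.tail ⟨htx, hty, h⟩⟩
  · rcases hx.2.2.cases_tail with heq | ⟨c, hc1, hc2⟩
    · exact absurd h (heq ▸ hx.2.1 y hty)
    · have : c = y := parent_unique hN htx hc2.2.2 h
      exact ⟨hx.1, hx.2.1, this ▸ hc1⟩

lemma apex_rtg (hN : IsNetwork A ρ) {a x y : V} (hx : Apex A a x)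
    (h : Relation.ReflTransGen (TAdj A) x y) : Apex A a y := by
  induction h with
  | refl => exact hx
  | tail _ hstep ih => exact apex_step hN ih hstep

lemma tadj_symm {x y : V} (h : TAdj A x y) : TAdj A y x :=
  ⟨h.2.1, h.1, h.2.2.symm⟩

lemma rtg_tadj_symm {x y : V} (h : Relation.ReflTransGen (TAdj A) x y) :
    Relation.ReflTransGen (TAdj A) y x := by
  induction h with
  | refl => exact Relation.ReflTransGen.refl
  | tail _ hstep ih =>
    exact Relation.ReflTransGen.trans (Relation.ReflTransGen.single (tadj_symm hstep)) ih

lemma rtg_tadj_tree {u v : V} (hu : IsTreeNode A u)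
    (h : Relation.ReflTransGen (TAdj A) u v) : IsTreeNode A v := by
  induction h with
  | refl => exact hu
  | tail _ hstep _ => exact hstep.2.1

lemma comp_eq {u w : V} (h : Relation.ReflTransGen (TAdj A) u w) :
    {v | Relation.ReflTransGen (TAdj A) u v} = {v | Relation.ReflTransGen (TAdj A) w v} := by
  ext v
  exact ⟨fun hv => (rtg_tadj_symm h).trans hv, fun hv => h.trans hv⟩

lemma comproot_unique (hN : IsNetwork A ρ) {S : Set V} {r r' : V} (hS : IsTNC A S)
    (h1 : CompRoot A S r) (h2 : CompRoot A S r') : r = r' := by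
  obtain ⟨u, hu, rfl⟩ := hS
  have htr : IsTreeNode A r := rtg_tadj_tree hu h1.1
  have htr' : IsTreeNode A r' := rtg_tadj_tree hu h2.1
  have hrr' : Relation.ReflTransGen (TAdj A) r r' := (rtg_tadj_symm h1.1).trans h2.1
  have hA : Apex A r r' := apex_rtg hN ⟨htr, h1.2, Relation.ReflTransGen.refl⟩ hrr'
  exact apex_unique_aux hN hA.2.1 hA.2.2 r' ⟨htr', h2.2, Relation.ReflTransGen.refl⟩

end Aux

/-- In a reticulation-visible network, the number of reticulation nodes equals the
number of tree node components minus one. -/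
theorem ret_count_eq_components_sub_one {V : Type} (A : V → V → Prop) (ρ : V)
    (hN : IsNetwork A ρ) (hRV : RetVisible A ρ) :
    {r | IsRet A r}.ncard = {S : Set V | IsTNC A S}.ncard - 1 := by
  classical
  have hfin := hN.finite
  have hch : ∀ r : V, IsRet A r → ∃ c, A r c ∧ ∀ w, A r w → w = c :=
    fun r hr => exists_unique_child hfin hr.2
  choose! c hc1 hc2 using hch
  set f : V → Set V := fun r => {v | Relation.ReflTransGen (TAdj A) (c r) v} with hf
  set Sρ : Set V := {v | Relation.ReflTransGen (TAdj A) ρ v} with hSρ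
  have hρtree : IsTreeNode A ρ := by
    intro hr
    have h1 := hr.1
    have h2 := hN.root_indeg
    omega
  have hctree : ∀ r, IsRet A r → IsTreeNode A (c r) := fun r hr hret =>
    child_not_ret hN hRV hr (hc1 r hr) hret
  have hcne : ∀ r, IsRet A r → c r ≠ ρ := by
    intro r hr h
    have h1 := indeg_pos hfin (hc1 r hr)
    rw [h, hN.root_indeg] at h1
    omega
  have hcroot : ∀ r, IsRet A r → CompRoot A (f r) (c r) := by
    intro r hr
    refine ⟨Relation.ReflTransGen.refl, fun t ht hA => ?_⟩
    have htr : t = r := parent_unique hN (hctree r hr) hA (hc1 r hr)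
    exact (htr ▸ ht) hr
  have hTNCf : ∀ r, IsRet A r → IsTNC A (f r) := fun r hr => ⟨c r, hctree r hr, rfl⟩
  have hTNCρ : IsTNC A Sρ := ⟨ρ, hρtree, rfl⟩
  have hinj : Set.InjOn f {r | IsRet A r} := by
    intro r hr r' hr' heq
    have h1 : CompRoot A (f r) (c r) := hcroot r hr
    have h2 : CompRoot A (f r) (c r') := heq ▸ hcroot r' hr'
    have hcc : c r = c r' := comproot_unique hN (hTNCf r hr) h1 h2
    refine parent_unique hN (hctree r hr) (hc1 r hr) ?_
    rw [hcc]
    exact hc1 r' hr'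
  have hρroot : CompRoot A Sρ ρ := by
    refine ⟨Relation.ReflTransGen.refl, fun t _ hA => ?_⟩
    have h1 := indeg_pos hfin hA
    rw [hN.root_indeg] at h1
    omega
  have hnotmem : Sρ ∉ f '' {r | IsRet A r} := by
    rintro ⟨r, hr, heq⟩
    exact hcne r hr (comproot_unique hN hTNCρ (heq ▸ hcroot r hr) hρroot)
  have himg : {S : Set V | IsTNC A S} = insert Sρ (f '' {r | IsRet A r}) := by
    ext S
    constructor
    · rintro ⟨u, hu, rfl⟩
      obtain ⟨a, ha⟩ := apex_exists hN hu
      have haTA : Relation.ReflTransGen (TAdj A) a u :=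
        Relation.ReflTransGen.mono (r := TEdge A) (p := TAdj A) (fun x y (h : TEdge A x y) => (⟨h.1, h.2.1, Or.inl h.2.2⟩ : TAdj A x y)) _ _ ha.2.2
      have haS : Relation.ReflTransGen (TAdj A) u a := rtg_tadj_symm haTA
      by_cases haρ : a = ρ
      · left
        rw [hSρ, ← haρ]
        exact comp_eq haS
      · right
        have hane : a ≠ ρ := haρ
        have hpar : ∃ p, A p a := by
          rcases hN.degree_cond a hane with ⟨hd1, _⟩ | ⟨hd2, _⟩
          · rw [inDeg, Set.ncard_eq_one] at hd1
            obtain ⟨p, hp⟩ := hd1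
            refine ⟨p, ?_⟩
            have hm : p ∈ ({p} : Set V) := rfl
            rw [← hp] at hm
            exact hm
          · rw [inDeg] at hd2
            rcases Set.eq_empty_or_nonempty {u' | A u' a} with he | ⟨p, hp⟩
            · rw [he] at hd2
              simp at hd2
            · exact ⟨p, hp⟩
        obtain ⟨p, hpa⟩ := hpar
        have hpret : IsRet A p := by
          by_contra h
          exact ha.2.1 p h hpa
        have hcpa : c p = a := (hc2 p hpret a hpa).symm
        refine ⟨p, hpret, ?_⟩
        rw [hf]
        simp only
        rw [hcpa]
        exact (comp_eq haS).symm
    · rintro (rfl | ⟨r, hr, rfl⟩)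
      · exact hTNCρ
      · exact hTNCf r hr
  have hfin2 : (f '' {r | IsRet A r}).Finite := (Set.toFinite _).image f
  have h1 : {S : Set V | IsTNC A S}.ncard = (f '' {r | IsRet A r}).ncard + 1 := by
    rw [himg, Set.ncard_insert_of_notMem hnotmem hfin2]
  rw [h1, Set.ncard_image_of_injOn hinj]
  omega

end PhyloNet
end
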